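/- If G is a connected interval graph, then there is a vertex contained in every longest path of G. -/

import Mathlib

open SimpleGraph

namespace IntervalHelpers

variable {V : Type*} {G : SimpleGraph V}

/-- A path of maximum length. -/
def IsLongest (G : SimpleGraph V) {x y : V} (p : G.Walk x y) : Prop :=
  p.IsPath ∧ ∀ ⦃c d : V⦄ (q : G.Walk c d), q.IsPath → q.length ≤ p.length

lemma isPath_append_of {u v w : V} {p : G.Walk u v} {q : G.Walk v w}
    (hp : p.IsPath) (hq : q.IsPath)
    (h : ∀ y, y ∈ p.support → y ∈ q.support → y = v) :
    (p.append q).IsPath := by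
  rw [Walk.isPath_def, Walk.support_append]
  have htail : q.support.tail.Nodup := by
    have := hq.support_nodup
    exact this.tail
  refine List.Nodup.append hp.support_nodup htail ?_
  intro y hy1 hy2
  have hy2' : y ∈ q.support := List.mem_of_mem_tail hy2
  have hyv : y = v := h y hy1 hy2'
  have hvt : v ∈ q.support.tail := hyv ▸ hy2
  have hnd := hq.support_nodup
  rw [q.support_eq_cons] at hnd
  exact (List.nodup_cons.1 hnd).1 hvt

lemma insert_dart {v : V} :
    ∀ {x y : V} (q : G.Walk x y), q.IsPath → v ∉ q.support →
    ∀ d ∈ q.darts, G.Adj v d.fst → G.Adj v d.snd →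
    ∃ q' : G.Walk x y, q'.IsPath ∧ q'.length = q.length + 1 ∧
      ∀ z ∈ q'.support, z = v ∨ z ∈ q.support := by
  intro x y q
  induction q with
  | nil => intro _ _ d hd; simp at hd
  | @cons x u y h q ih =>
    intro hp hv d hd hfst hsnd
    rw [Walk.darts_cons, List.mem_cons] at hd
    rw [Walk.support_cons, List.mem_cons] at hv
    push_neg at hv
    obtain ⟨hvx, hvq⟩ := hv
    rw [Walk.cons_isPath_iff] at hp
    obtain ⟨hqp, hxq⟩ := hp
    rcases hd with rfl | hd
    · -- insert v between x and u
      refine ⟨Walk.cons hfst.symm (Walk.cons hsnd q), ?_, by simp, ?_⟩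
      · rw [Walk.cons_isPath_iff]
        constructor
        · rw [Walk.cons_isPath_iff]
          exact ⟨hqp, hvq⟩
        · rw [Walk.support_cons, List.mem_cons]
          push_neg
          exact ⟨fun hxv => hvx hxv.symm, hxq⟩
      · intro z hz
        rw [Walk.support_cons, List.mem_cons] at hz
        rcases hz with rfl | hz
        · right; rw [Walk.support_cons]; exact List.mem_cons_self
        · rw [Walk.support_cons, List.mem_cons] at hz
          rcases hz with rfl | hz
          · left; rfl
          · right; rw [Walk.support_cons]; exact List.mem_cons_of_mem _ hz
    · obtain ⟨q', hq'p, hq'l, hq's⟩ := ih hqp hvq d hd hfst hsnd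
      refine ⟨Walk.cons h q', ?_, by simp [hq'l], ?_⟩
      · rw [Walk.cons_isPath_iff]
        refine ⟨hq'p, fun hxe => ?_⟩
        rcases hq's x hxe with rfl | hxs
        · exact hvx rfl
        · exact hxq hxs
      · intro z hz
        rw [Walk.support_cons, List.mem_cons] at hz
        rcases hz with rfl | hz
        · right; rw [Walk.support_cons]; exact List.mem_cons_self
        · rcases hq's z hz with rfl | hzs
          · left; rfl
          · right; rw [Walk.support_cons]; exact List.mem_cons_of_mem _ hzs

lemma exists_dart_at :
    ∀ {x y : V} (q : G.Walk x y) (w : V), w ∈ q.support → 0 < q.length →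
    ∃ d ∈ q.darts, d.fst = w ∨ d.snd = w := by
  intro x y q
  induction q with
  | nil => intro w _ hl; simp at hl
  | @cons x u y h q ih =>
    intro w hw _
    rw [Walk.support_cons, List.mem_cons] at hw
    rcases hw with rfl | hw
    · exact ⟨⟨(w, u), h⟩, by rw [Walk.darts_cons]; exact List.mem_cons_self, Or.inl rfl⟩
    · cases q with
      | nil =>
        simp only [Walk.support_nil, List.mem_singleton] at hw
        subst hw
        exact ⟨⟨(x, w), h⟩, by rw [Walk.darts_cons]; exact List.mem_cons_self, Or.inr rfl⟩
      | cons h' q' =>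
        obtain ⟨d, hd, hor⟩ := ih w hw (by simp)
        exact ⟨d, by rw [Walk.darts_cons]; exact List.mem_cons_of_mem _ hd, hor⟩

lemma closure_prop (P : V → Prop) :
    ∀ {x y : V} (q : G.Walk x y),
    (∀ d ∈ q.darts, (P d.fst ↔ P d.snd)) →
    ∀ u ∈ q.support, P u → ∀ w ∈ q.support, P w := by
  intro x y q
  induction q with
  | nil =>
    intro _ u hu hPu w hw
    simp only [Walk.support_nil, List.mem_singleton] at hu hw
    subst hu; subst hw; exact hPu
  | @cons x m y h q ih =>
    intro hD u hu hPu w hw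
    have hhead : P x ↔ P m := by
      have : (⟨(x, m), h⟩ : G.Dart) ∈ (Walk.cons h q).darts := by
        rw [Walk.darts_cons]; exact List.mem_cons_self
      exact hD _ this
    have hDq : ∀ d ∈ q.darts, (P d.fst ↔ P d.snd) := fun d hd =>
      hD d (by rw [Walk.darts_cons]; exact List.mem_cons_of_mem _ hd)
    rw [Walk.support_cons, List.mem_cons] at hu hw
    rcases hu with rfl | hu <;> rcases hw with rfl | hw
    · exact hPu
    · exact ih hDq m q.start_mem_support (hhead.1 hPu) w hw
    · exact hhead.2 (ih hDq u hu hPu m q.start_mem_support)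
    · exact ih hDq u hu hPu w hw

lemma coverage {aa bb : V → ℝ}
    (hA : ∀ ⦃s t : V⦄, G.Adj s t → aa s < bb t ∧ aa t < bb s) (r : ℝ) :
    ∀ {x y : V} (q : G.Walk x y),
    (∃ v ∈ q.support, aa v < r) → (∃ v ∈ q.support, r < bb v) →
    ∃ v ∈ q.support, aa v < r ∧ r < bb v := by
  intro x y q
  induction q with
  | nil =>
    intro h1 h2
    obtain ⟨v1, hv1, ha1⟩ := h1
    obtain ⟨v2, hv2, hb2⟩ := h2
    simp only [Walk.support_nil, List.mem_singleton] at hv1 hv2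
    rw [hv1] at ha1; rw [hv2] at hb2
    exact ⟨_, by simp, ha1, hb2⟩
  | @cons x m y h q ih =>
    intro h1 h2
    obtain ⟨v1, hv1, ha1⟩ := h1
    obtain ⟨v2, hv2, hb2⟩ := h2
    rw [Walk.support_cons, List.mem_cons] at hv1 hv2
    by_cases hx : aa x < r ∧ r < bb x
    · exact ⟨x, by rw [Walk.support_cons]; exact List.mem_cons_self, hx⟩
    rcases hv1 with h1 | hv1 <;> rcases hv2 with h2 | hv2
    · rw [h1] at ha1; rw [h2] at hb2; exact absurd ⟨ha1, hb2⟩ hx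
    · -- aa x < r, witness2 in q
      rw [h1] at ha1
      have hbx : ¬ r < bb x := fun hh => hx ⟨ha1, hh⟩
      push_neg at hbx
      have ham : aa m < r := lt_of_lt_of_le (hA h).2 hbx
      obtain ⟨v, hv, hres⟩ := ih ⟨m, q.start_mem_support, ham⟩ ⟨v2, hv2, hb2⟩
      exact ⟨v, by rw [Walk.support_cons]; exact List.mem_cons_of_mem _ hv, hres⟩
    · -- r < bb x (v2 = x), witness1 in q
      rw [h2] at hb2
      have hax : ¬ aa x < r := fun hh => hx ⟨hh, hb2⟩
      push_neg at hax
      have hbm : r < bb m := lt_of_le_of_lt hax (hA h).1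
      obtain ⟨v, hv, hres⟩ := ih ⟨v1, hv1, ha1⟩ ⟨m, q.start_mem_support, hbm⟩
      exact ⟨v, by rw [Walk.support_cons]; exact List.mem_cons_of_mem _ hv, hres⟩
    · obtain ⟨v, hv, hres⟩ := ih ⟨v1, hv1, ha1⟩ ⟨v2, hv2, hb2⟩
      exact ⟨v, by rw [Walk.support_cons]; exact List.mem_cons_of_mem _ hv, hres⟩

lemma exists_min_on (f : V → ℝ) :
    ∀ {x y : V} (q : G.Walk x y), ∃ v ∈ q.support, ∀ u ∈ q.support, f v ≤ f u := by
  intro x y q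
  induction q with
  | nil =>
    rename_i u
    refine ⟨u, by simp, fun w hw => ?_⟩
    simp only [Walk.support_nil, List.mem_singleton] at hw
    rw [hw]
  | @cons x m y h q ih =>
    obtain ⟨v, hv, hmin⟩ := ih
    by_cases hc : f x ≤ f v
    · refine ⟨x, by rw [Walk.support_cons]; exact List.mem_cons_self, ?_⟩
      intro u hu
      rw [Walk.support_cons, List.mem_cons] at hu
      rcases hu with rfl | hu
      · exact le_rfl
      · exact le_trans hc (hmin u hu)
    · push_neg at hc
      refine ⟨v, by rw [Walk.support_cons]; exact List.mem_cons_of_mem _ hv, ?_⟩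
      intro u hu
      rw [Walk.support_cons, List.mem_cons] at hu
      rcases hu with rfl | hu
      · exact le_of_lt hc
      · exact hmin u hu

lemma trim_last (A : V → Prop) :
    ∀ (n : ℕ) ⦃s t : V⦄ (r : G.Walk s t), r.length ≤ n → A s →
    ∃ u, A u ∧ ∃ r' : G.Walk u t, ∀ z ∈ r'.support, A z → z = u := by
  classical
  intro n
  induction n with
  | zero =>
    intro s t r hr hA
    cases r with
    | nil =>
      exact ⟨_, hA, Walk.nil, fun z hz _ => by simpa using hz⟩
    | cons h q => simp at hr
  | succ n ih =>
    intro s t r hr hA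
    cases r with
    | nil =>
      exact ⟨_, hA, Walk.nil, fun z hz _ => by simpa using hz⟩
    | @cons s m t h q =>
      by_cases hq : ∃ z ∈ q.support, A z
      · obtain ⟨z, hz, hAz⟩ := hq
        have hlen : (q.dropUntil z hz).length ≤ n := by
          have h1 := Walk.length_dropUntil_le q hz
          have h2 : q.length + 1 ≤ n + 1 := by simpa using hr
          omega
        exact ih (q.dropUntil z hz) hlen hAz
      · push_neg at hq
        refine ⟨s, hA, Walk.cons h q, ?_⟩
        intro z hz hAz
        rw [Walk.support_cons, List.mem_cons] at hz
        rcases hz with rfl | hz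
        · rfl
        · exact absurd hAz (hq z hz)

lemma trim_first (B : V → Prop) :
    ∀ {s t : V} (r : G.Walk s t), B t →
    ∃ w, B w ∧ ∃ r' : G.Walk s w, (∀ z ∈ r'.support, B z → z = w) ∧
      (∀ z ∈ r'.support, z ∈ r.support) := by
  intro s t r
  induction r with
  | nil =>
    intro hB
    exact ⟨_, hB, Walk.nil, fun z hz _ => by simpa using hz, fun z hz => hz⟩
  | @cons s m t h q ih =>
    intro hBt
    by_cases hBs : B s
    · refine ⟨s, hBs, Walk.nil, fun z hz _ => by simpa using hz, fun z hz => ?_⟩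
      simp only [Walk.support_nil, List.mem_singleton] at hz
      rw [hz]
      exact Walk.start_mem_support _
    · obtain ⟨w, hBw, r', hprop, hsub⟩ := ih hBt
      refine ⟨w, hBw, Walk.cons h r', ?_, ?_⟩
      · intro z hz hBz
        rw [Walk.support_cons, List.mem_cons] at hz
        rcases hz with rfl | hz
        · exact absurd hBz hBs
        · exact hprop z hz hBz
      · intro z hz
        rw [Walk.support_cons, List.mem_cons] at hz
        rcases hz with rfl | hz
        · exact Walk.start_mem_support _
        · rw [Walk.support_cons]
          exact List.mem_cons_of_mem _ (hsub z hz)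

lemma two_longest_meet (hpc : G.Preconnected) {x1 y1 x2 y2 : V}
    (p : G.Walk x1 y1) (q : G.Walk x2 y2) (hp : p.IsPath) (hq : q.IsPath)
    (hpm : ∀ ⦃c d : V⦄ (r : G.Walk c d), r.IsPath → r.length ≤ p.length)
    (hqm : ∀ ⦃c d : V⦄ (r : G.Walk c d), r.IsPath → r.length ≤ q.length) :
    ∃ z, z ∈ p.support ∧ z ∈ q.support := by
  classical
  by_contra hno
  push_neg at hno
  obtain ⟨r0⟩ := hpc x1 x2
  obtain ⟨u, hu, r1, hr1⟩ :=
    trim_last (fun z => z ∈ p.support) r0.length r0 le_rfl p.start_mem_support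
  obtain ⟨w, hw, r2, hr2Q, hr2sub⟩ :=
    trim_first (fun z => z ∈ q.support) r1 q.start_mem_support
  set r3 := r2.bypass with hr3def
  have hr3p : r3.IsPath := Walk.bypass_isPath r2
  have hr3sub : ∀ z ∈ r3.support, z ∈ r2.support := fun z hz =>
    Walk.support_bypass_subset r2 hz
  have hPu : ∀ z ∈ r3.support, z ∈ p.support → z = u := fun z hz hzp =>
    hr1 z (hr2sub z (hr3sub z hz)) hzp
  have hQw : ∀ z ∈ r3.support, z ∈ q.support → z = w := fun z hz hzq =>
    hr2Q z (hr3sub z hz) hzq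
  have hne : u ≠ w := by
    intro hEq
    exact hno u hu (hEq ▸ hw)
  have hr3len : 1 ≤ r3.length := by
    rcases Nat.eq_zero_or_pos r3.length with h0 | h1
    · exact absurd (Walk.eq_of_length_eq_zero h0) hne
    · exact h1
  -- long half of p ending at u
  have Hp : ∃ (e : V) (h1 : G.Walk e u), h1.IsPath ∧ (∀ z ∈ h1.support, z ∈ p.support) ∧
      p.length ≤ 2 * h1.length := by
    have hsp := congrArg Walk.length (p.take_spec hu)
    rw [Walk.length_append] at hsp
    rcases le_total (p.takeUntil u hu).length (p.dropUntil u hu).length with hle | hle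
    · refine ⟨y1, (p.dropUntil u hu).reverse, (hp.dropUntil hu).reverse, ?_, ?_⟩
      · intro z hz
        rw [Walk.support_reverse, List.mem_reverse] at hz
        exact Walk.support_dropUntil_subset p hu hz
      · rw [Walk.length_reverse]; omega
    · refine ⟨x1, p.takeUntil u hu, hp.takeUntil hu, ?_, by omega⟩
      intro z hz
      exact Walk.support_takeUntil_subset p hu hz
  -- long half of q starting at w
  have Hq : ∃ (f : V) (h2 : G.Walk w f), h2.IsPath ∧ (∀ z ∈ h2.support, z ∈ q.support) ∧
      q.length ≤ 2 * h2.length := by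
    have hsq := congrArg Walk.length (q.take_spec hw)
    rw [Walk.length_append] at hsq
    rcases le_total (q.takeUntil w hw).length (q.dropUntil w hw).length with hle | hle
    · refine ⟨y2, q.dropUntil w hw, hq.dropUntil hw, ?_, by omega⟩
      intro z hz
      exact Walk.support_dropUntil_subset q hw hz
    · refine ⟨x2, (q.takeUntil w hw).reverse, (hq.takeUntil hw).reverse, ?_, ?_⟩
      · intro z hz
        rw [Walk.support_reverse, List.mem_reverse] at hz
        exact Walk.support_takeUntil_subset q hw hz
      · rw [Walk.length_reverse]; omega
  obtain ⟨e, h1, h1p, h1s, h1l⟩ := Hp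
  obtain ⟨f, h2, h2p, h2s, h2l⟩ := Hq
  have hA1 : (h1.append r3).IsPath := by
    refine isPath_append_of h1p hr3p ?_
    intro z hz1 hz3
    exact hPu z hz3 (h1s z hz1)
  have hN : ((h1.append r3).append h2).IsPath := by
    refine isPath_append_of hA1 h2p ?_
    intro z hzA hz2
    rw [Walk.mem_support_append_iff] at hzA
    rcases hzA with hz1 | hz3
    · exact absurd (h2s z hz2) (hno z (h1s z hz1))
    · exact hQw z hz3 (h2s z hz2)
  have hlen : ((h1.append r3).append h2).length = h1.length + r3.length + h2.length := by
    rw [Walk.length_append, Walk.length_append]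
  have hNle := hpm _ hN
  have hqp : q.length ≤ p.length := hpm q hq
  have hpq : p.length ≤ q.length := hqm p hp
  omega

end IntervalHelpers

open IntervalHelpers in
/-- If `G` is a connected interval graph, then there is a vertex contained in every
longest path of `G`. -/
theorem stmt11 {V : Type*} [Fintype V] (G : SimpleGraph V) (φ : V → Set ℝ)
    (hφ : ∀ v, ∃ a b : ℝ, φ v = Set.Ioo a b)
    (hadj : ∀ u w : V, u ≠ w → (G.Adj u w ↔ (φ u ∩ φ w).Nonempty))
    (hconn : G.Connected) :
    ∃ v : V, ∀ (x y : V) (p : G.Walk x y), p.IsPath →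
      (∀ ⦃a b : V⦄ (q : G.Walk a b), q.IsPath → q.length ≤ p.length) →
      v ∈ p.support := by
  classical
  obtain ⟨v0⟩ := hconn.nonempty
  by_cases hsing : ∀ w : V, w = v0
  · refine ⟨v0, fun x y p _ _ => ?_⟩
    have hx := p.start_mem_support
    rw [← hsing x]
    exact hx
  push_neg at hsing
  obtain ⟨w1, hw1⟩ := hsing
  choose a b hab using hφ
  have hnb : ∀ v : V, ∃ u, G.Adj v u := by
    intro v
    by_cases hv : v = w1
    · obtain ⟨r⟩ := hconn.preconnected v v0
      cases r with
      | nil => exact absurd hv.symm hw1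
      | cons h q => exact ⟨_, h⟩
    · obtain ⟨r⟩ := hconn.preconnected v w1
      cases r with
      | nil => exact absurd rfl hv
      | cons h q => exact ⟨_, h⟩
  have hAdj2 : ∀ ⦃s t : V⦄, G.Adj s t → a s < b t ∧ a t < b s := by
    intro s t hst
    obtain ⟨r, hr1, hr2⟩ := (hadj s t hst.ne).1 hst
    rw [hab s] at hr1; rw [hab t] at hr2
    exact ⟨lt_trans hr1.1 hr2.2, lt_trans hr2.1 hr1.2⟩
  have hIoo : ∀ v, a v < b v := by
    intro v
    obtain ⟨u, hu⟩ := hnb v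
    obtain ⟨r, hr1, -⟩ := (hadj v u hu.ne).1 hu
    rw [hab v] at hr1
    exact lt_trans hr1.1 hr1.2
  -- existence of a longest path
  have hex : ∃ (c d : V) (p : G.Walk c d), IsLongest G p := by
    set P : ℕ → Prop := fun k => ∃ (c d : V) (p : G.Walk c d), p.IsPath ∧ p.length = k
      with hPdef
    have hP0 : P 0 := ⟨v0, v0, Walk.nil, Walk.IsPath.nil, rfl⟩
    have hPn : P (Nat.findGreatest P (Fintype.card V)) :=
      Nat.findGreatest_spec (Nat.zero_le _) hP0
    obtain ⟨c, d, p, hp, hlen⟩ := hPn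
    refine ⟨c, d, p, hp, ?_⟩
    intro c' d' q hq
    have hcard : q.length ≤ Fintype.card V := le_of_lt hq.length_lt
    have hle : q.length ≤ Nat.findGreatest P (Fintype.card V) :=
      Nat.le_findGreatest hcard ⟨c', d', q, hq, rfl⟩
    omega
  obtain ⟨c0, d0, p0, hp0⟩ := hex
  -- a path of length one
  obtain ⟨u1, hu1⟩ := hnb v0
  have honepath : ∃ (c d : V) (q : G.Walk c d), q.IsPath ∧ q.length = 1 := by
    refine ⟨v0, u1, Walk.cons hu1 Walk.nil, ?_, rfl⟩
    rw [Walk.cons_isPath_iff]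
    refine ⟨Walk.IsPath.nil, ?_⟩
    simp only [Walk.support_nil, List.mem_singleton]
    exact hu1.ne
  -- the set of "min left endpoints of longest paths", and its max, m
  have hSmax : ∃ em, ({r : ℝ | ∃ (c d : V) (p : G.Walk c d), IsLongest G p ∧
      ∃ v ∈ p.support, a v = r ∧ ∀ u ∈ p.support, a v ≤ a u} : Set ℝ) em ∧
      ∀ r ∈ ({r : ℝ | ∃ (c d : V) (p : G.Walk c d), IsLongest G p ∧
      ∃ v ∈ p.support, a v = r ∧ ∀ u ∈ p.support, a v ≤ a u} : Set ℝ), r ≤ em := by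
    have hfin : ({r : ℝ | ∃ (c d : V) (p : G.Walk c d), IsLongest G p ∧
        ∃ v ∈ p.support, a v = r ∧ ∀ u ∈ p.support, a v ≤ a u} : Set ℝ).Finite := by
      refine (Set.finite_range a).subset ?_
      rintro r ⟨c, d, p, hL, v, hv, rfl, hmin⟩
      exact ⟨v, rfl⟩
    have hne : ({r : ℝ | ∃ (c d : V) (p : G.Walk c d), IsLongest G p ∧
        ∃ v ∈ p.support, a v = r ∧ ∀ u ∈ p.support, a v ≤ a u} : Set ℝ).Nonempty := by
      obtain ⟨v, hv, hvmin⟩ := exists_min_on (G := G) a p0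
      exact ⟨a v, c0, d0, p0, hp0, v, hv, rfl, hvmin⟩
    obtain ⟨em, hem, hmax⟩ := Set.exists_max_image _ id hfin hne
    exact ⟨em, hem, hmax⟩
  obtain ⟨m, hmS, hmmax⟩ := hSmax
  obtain ⟨cm, dm, Pm, hPmL, vm, hvm, hvma, hvmmin⟩ := hmS
  have hm_ub : ∀ ⦃c d : V⦄ (q : G.Walk c d), IsLongest G q →
      ∃ v ∈ q.support, a v ≤ m := by
    intro c d q hq
    obtain ⟨v, hv, hvmin⟩ := exists_min_on (G := G) a q
    exact ⟨v, hv, hmmax (a v) ⟨c, d, q, hq, v, hv, rfl, hvmin⟩⟩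
  -- the set of "max right endpoints of longest paths", and its min, M
  have hTmin : ∃ em, ({r : ℝ | ∃ (c d : V) (p : G.Walk c d), IsLongest G p ∧
      ∃ v ∈ p.support, b v = r ∧ ∀ u ∈ p.support, b u ≤ b v} : Set ℝ) em ∧
      ∀ r ∈ ({r : ℝ | ∃ (c d : V) (p : G.Walk c d), IsLongest G p ∧
      ∃ v ∈ p.support, b v = r ∧ ∀ u ∈ p.support, b u ≤ b v} : Set ℝ), em ≤ r := by
    have hfin : ({r : ℝ | ∃ (c d : V) (p : G.Walk c d), IsLongest G p ∧
        ∃ v ∈ p.support, b v = r ∧ ∀ u ∈ p.support, b u ≤ b v} : Set ℝ).Finite := by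
      refine (Set.finite_range b).subset ?_
      rintro r ⟨c, d, p, hL, v, hv, rfl, hmax⟩
      exact ⟨v, rfl⟩
    have hne : ({r : ℝ | ∃ (c d : V) (p : G.Walk c d), IsLongest G p ∧
        ∃ v ∈ p.support, b v = r ∧ ∀ u ∈ p.support, b u ≤ b v} : Set ℝ).Nonempty := by
      obtain ⟨v, hv, hvmax⟩ := exists_min_on (G := G) (fun z => -(b z)) p0
      refine ⟨b v, c0, d0, p0, hp0, v, hv, rfl, fun u hu => ?_⟩
      have := hvmax u hu
      linarith
    obtain ⟨em, hem, hmin⟩ := Set.exists_min_image _ id hfin hne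
    exact ⟨em, hem, hmin⟩
  obtain ⟨M, hMS, hMmin⟩ := hTmin
  obtain ⟨cM, dM, PM, hPML, wM, hwM, hwMb, hwMmax⟩ := hMS
  have hM_lb : ∀ ⦃c d : V⦄ (q : G.Walk c d), IsLongest G q →
      ∃ v ∈ q.support, M ≤ b v := by
    intro c d q hq
    obtain ⟨v, hv, hvmax⟩ := exists_min_on (G := G) (fun z => -(b z)) q
    refine ⟨v, hv, hMmin (b v) ⟨c, d, q, hq, v, hv, rfl, fun u hu => ?_⟩⟩
    have := hvmax u hu
    linarith
  -- m < M
  obtain ⟨z0, hz0m, hz0M⟩ :=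
    two_longest_meet hconn.preconnected Pm PM hPmL.1 hPML.1 hPmL.2 hPML.2
  have hmM : m < M := by
    have h1 := hvmmin z0 hz0m
    rw [hvma] at h1
    have h2 := hwMmax z0 hz0M
    rw [hwMb] at h2
    have := hIoo z0
    linarith
  -- lo and xx
  have hEmax : ∃ lo, (lo = m ∨ ((∃ v : V, lo = a v ∨ lo = b v) ∧ lo < M)) ∧
      m ≤ lo ∧ lo < M ∧
      (∀ v : V, a v < M → a v ≤ lo) ∧ (∀ v : V, b v < M → b v ≤ lo) := by
    have hfin : ({r : ℝ | r = m ∨ ((∃ v : V, r = a v ∨ r = b v) ∧ r < M)} : Set ℝ).Finite := by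
      refine (((Set.finite_singleton m).union
        ((Set.finite_range a).union (Set.finite_range b))).subset ?_)
      rintro r (rfl | ⟨⟨v, rfl | rfl⟩, -⟩)
      · exact Or.inl rfl
      · exact Or.inr (Or.inl ⟨v, rfl⟩)
      · exact Or.inr (Or.inr ⟨v, rfl⟩)
    have hne : ({r : ℝ | r = m ∨ ((∃ v : V, r = a v ∨ r = b v) ∧ r < M)} : Set ℝ).Nonempty :=
      ⟨m, Or.inl rfl⟩
    obtain ⟨lo, hloS, hlomax⟩ := Set.exists_max_image _ id hfin hne
    refine ⟨lo, hloS, hlomax m (Or.inl rfl), ?_, ?_, ?_⟩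
    · rcases hloS with rfl | ⟨-, h⟩
      · exact hmM
      · exact h
    · intro v h
      exact hlomax (a v) (Or.inr ⟨⟨v, Or.inl rfl⟩, h⟩)
    · intro v h
      exact hlomax (b v) (Or.inr ⟨⟨v, Or.inr rfl⟩, h⟩)
  obtain ⟨lo, -, hmlo, hloM, hendA, hendB⟩ := hEmax
  set xx := (lo + M) / 2 with hxx
  have hlox : lo < xx := by rw [hxx]; linarith
  have hxxM : xx < M := by rw [hxx]; linarith
  -- seed: every longest path has a vertex whose interval contains xx
  have hseed : ∀ ⦃c d : V⦄ (q : G.Walk c d), IsLongest G q →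
      ∃ v ∈ q.support, a v < xx ∧ xx < b v := by
    intro c d q hq
    obtain ⟨v1, hv1, hv1m⟩ := hm_ub q hq
    obtain ⟨v2, hv2, hv2M⟩ := hM_lb q hq
    exact coverage hAdj2 xx q ⟨v1, hv1, by linarith⟩ ⟨v2, hv2, by linarith⟩
  -- the clique at xx and its leftmost member vstar
  have hCs : ∃ vstar : V, (a vstar < xx ∧ xx < b vstar) ∧
      ∀ w : V, (a w < xx ∧ xx < b w) → a vstar ≤ a w := by
    have hfin : ({v : V | a v < xx ∧ xx < b v} : Set V).Finite := Set.toFinite _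
    have hne : ({v : V | a v < xx ∧ xx < b v} : Set V).Nonempty := by
      obtain ⟨v, hv, h1, h2⟩ := hseed p0 hp0
      exact ⟨v, h1, h2⟩
    obtain ⟨vstar, hvs, hmin⟩ := Set.exists_min_image _ a hfin hne
    exact ⟨vstar, hvs, fun w hw => hmin w hw⟩
  obtain ⟨vstar, ⟨hvsa, hvsb⟩, hvsmin⟩ := hCs
  have hbvs : M ≤ b vstar := by
    by_contra hcon
    push_neg at hcon
    have := hendB vstar hcon
    linarith
  -- main contradiction
  by_contra hcon
  push_neg at hcon
  obtain ⟨xq, yq, Q, hQp, hQm, hQmiss⟩ := hcon vstar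
  have hQL : IsLongest G Q := ⟨hQp, hQm⟩
  have hQlen : 1 ≤ Q.length := by
    obtain ⟨c, d, q1, hq1, hq1l⟩ := honepath
    have := hQm q1 hq1
    omega
  have key : ∀ w u : V,
      (∃ d ∈ Q.darts, (d.fst = w ∧ d.snd = u) ∨ (d.fst = u ∧ d.snd = w)) →
      a w < xx → xx < b w → M ≤ a u := by
    rintro w u ⟨d, hd, hcase⟩ haw hbw
    have hwsup : w ∈ Q.support := by
      rcases hcase with ⟨h1, -⟩ | ⟨-, h2⟩
      · exact h1 ▸ Q.dart_fst_mem_support_of_mem_darts hd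
      · exact h2 ▸ Q.dart_snd_mem_support_of_mem_darts hd
    have husup : u ∈ Q.support := by
      rcases hcase with ⟨-, h2⟩ | ⟨h1, -⟩
      · exact h2 ▸ Q.dart_snd_mem_support_of_mem_darts hd
      · exact h1 ▸ Q.dart_fst_mem_support_of_mem_darts hd
    have hAdjwu : G.Adj w u := by
      have hda := d.adj
      rcases hcase with ⟨h1, h2⟩ | ⟨h1, h2⟩
      · rw [h1, h2] at hda; exact hda
      · rw [h1, h2] at hda; exact hda.symm
    have hwv : w ≠ vstar := fun h => hQmiss (h ▸ hwsup)
    have huv : u ≠ vstar := fun h => hQmiss (h ▸ husup)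
    have hAvw : G.Adj vstar w := by
      refine (hadj vstar w (Ne.symm hwv)).2 ⟨xx, ?_, ?_⟩
      · rw [hab]; exact ⟨hvsa, hvsb⟩
      · rw [hab]; exact ⟨haw, hbw⟩
    have hnAdj : ¬ G.Adj vstar u := by
      intro hA
      have hf : G.Adj vstar d.fst ∧ G.Adj vstar d.snd := by
        rcases hcase with ⟨h1, h2⟩ | ⟨h1, h2⟩
        · rw [h1, h2]; exact ⟨hAvw, hA⟩
        · rw [h1, h2]; exact ⟨hA, hAvw⟩
      obtain ⟨q', hq', hlen, -⟩ := insert_dart Q hQp hQmiss d hd hf.1 hf.2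
      have := hQm q' hq'
      omega
    have hwu := hAdj2 hAdjwu
    by_contra hMau
    push_neg at hMau
    have hcases : b u ≤ a vstar ∨ b vstar ≤ a u := by
      by_contra hcc
      push_neg at hcc
      apply hnAdj
      have hmaxmin : max (a vstar) (a u) < min (b vstar) (b u) :=
        max_lt (lt_min (hIoo vstar) hcc.1) (lt_min hcc.2 (hIoo u))
      refine (hadj vstar u (Ne.symm huv)).2
        ⟨(max (a vstar) (a u) + min (b vstar) (b u)) / 2, ?_, ?_⟩
      · rw [hab]
        constructor
        · have := le_max_left (a vstar) (a u); linarith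
        · have := min_le_left (b vstar) (b u); linarith
      · rw [hab]
        constructor
        · have := le_max_right (a vstar) (a u); linarith
        · have := min_le_right (b vstar) (b u); linarith
    rcases hcases with hl | hr
    · have hminw : a vstar ≤ a w := hvsmin w ⟨haw, hbw⟩
      linarith [hwu.1]
    · linarith
  -- closure along Q
  have hclosed : ∀ d ∈ Q.darts, ((xx < b d.fst) ↔ (xx < b d.snd)) := by
    intro d hd
    constructor
    · intro h1
      by_cases haf : a d.fst < xx
      · have := key d.fst d.snd ⟨d, hd, Or.inl ⟨rfl, rfl⟩⟩ haf h1
        have h2 := hIoo d.snd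
        linarith
      · push_neg at haf
        have := (hAdj2 d.adj).1
        linarith
    · intro h2
      by_cases has : a d.snd < xx
      · have := key d.snd d.fst ⟨d, hd, Or.inr ⟨rfl, rfl⟩⟩ has h2
        have h3 := hIoo d.fst
        linarith
      · push_neg at has
        have := (hAdj2 d.adj).2
        linarith
  obtain ⟨wq, hwq, hwqa, hwqb⟩ := hseed Q hQL
  have hball : ∀ z ∈ Q.support, xx < b z :=
    fun z hz => closure_prop (fun v => xx < b v) Q hclosed wq hwq hwqb z hz
  -- a vertex shared with PM
  obtain ⟨z, hzQ, hzP⟩ :=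
    two_longest_meet hconn.preconnected Q PM hQp hPML.1 hQm hPML.2
  have hbz : xx < b z := hball z hzQ
  have hbzM : b z ≤ M := by
    have := hwMmax z hzP
    rw [hwMb] at this
    exact this
  have hazxx : a z < xx := by
    have h1 : a z < M := lt_of_lt_of_le (hIoo z) hbzM
    have := hendA z h1
    linarith
  obtain ⟨d, hd, hor⟩ := exists_dart_at Q z hzQ (by omega)
  rcases hor with hf | hs
  · have hk := key z d.snd ⟨d, hd, Or.inl ⟨hf, rfl⟩⟩ hazxx hbz
    have hAz : G.Adj z d.snd := hf ▸ d.adj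
    have := (hAdj2 hAz).2
    linarith
  · have hk := key z d.fst ⟨d, hd, Or.inr ⟨rfl, hs⟩⟩ hazxx hbz
    have hAz : G.Adj d.fst z := hs ▸ d.adj
    have := (hAdj2 hAz).1
    linarith
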